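/- Define K₁(t,r) = ∫_{r₁}^r w(s)·√(2(λ_c(t,r)−q(s))) ds − t·λ_c(t,r) on Ω_c. Then K₁ is continuously differentiable on Ω_c with ∂_tK₁(t,r) = −λ_c(t,r) and ∂_rK₁(t,r) = w(r)·√(2(λ_c(t,r)−q(r))); consequently K₁ solves the Hamilton–Jacobi equation ∂_tK₁ + (1/2)·(w(r)^{−1}·∂_rK₁)² + q(r) = 0 on Ω_c. (These are identities (3.9) and (3.10) of the paper's Lemma 3.1.) -/

import Mathlib

open MeasureTheory

/-- Tangent line inequality for the square root function. -/
lemma sqrt_tangent_aux {a b : ℝ} (ha : 0 ≤ a) (hb : 0 < b) :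
    Real.sqrt a - Real.sqrt b ≤ (a - b) / (2 * Real.sqrt b) := by
  have hsb : 0 < Real.sqrt b := Real.sqrt_pos.2 hb
  rw [le_div_iff₀ (by positivity)]
  nlinarith [sq_nonneg (Real.sqrt a - Real.sqrt b), Real.sq_sqrt ha, Real.sq_sqrt hb.le,
    Real.sqrt_nonneg a]

set_option maxHeartbeats 1000000 in
/-- The phase `K₁(t,r) = ∫_{r₁}^r w(s)√(2(λ_c(t,r)−q(s))) ds − t·λ_c(t,r)`
is `C¹` on `Ω_c` with `∂_tK₁ = −λ_c` and `∂_rK₁ = w(r)√(2(λ_c−q(r)))`; consequently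
`K₁` solves the Hamilton–Jacobi equation `∂_tK₁ + ½(w(r)⁻¹∂_rK₁)² + q(r) = 0` on `Ω_c`
(identities (3.9), (3.10) of the paper's Lemma 3.1). -/
theorem phase_K1_derivatives_and_HamiltonJacobi
    (lam0 lam1 r1 c1 c2 m : ℝ)
    (hlam : lam0 < lam1) (hr1 : 1 ≤ r1) (hc1 : 0 < c1) (hc12 : c1 ≤ c2)
    (hm : m ≤ (lam0 + lam1) / 2)
    (w q : ℝ → ℝ)
    (hw : ContinuousOn w (Set.Ici r1))
    (hwl : ∀ s, r1 ≤ s → c1 ≤ w s) (hwu : ∀ s, r1 ≤ s → w s ≤ c2)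
    (hq : ContinuousOn q (Set.Ici r1))
    (hql : ∀ s, r1 ≤ s → m ≤ q s) (hqu : ∀ s, r1 ≤ s → q s ≤ (lam0 + lam1) / 2)
    (T : ℝ → ℝ → ℝ)
    (hT : ∀ lam r, T lam r = ∫ s in r1..r, w s / Real.sqrt (2 * (lam - q s)))
    (Ωc : Set (ℝ × ℝ))
    (hΩc : Ωc = {p : ℝ × ℝ | 0 < p.1 ∧ r1 < p.2 ∧ p.1 < T lam1 p.2})
    (lamc : ℝ → ℝ → ℝ)
    (hlamc : ∀ p ∈ Ωc, lam1 < lamc p.1 p.2 ∧ T (lamc p.1 p.2) p.2 = p.1)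
    (K1 : ℝ → ℝ → ℝ)
    (hK1 : ∀ t r, K1 t r
      = (∫ s in r1..r, w s * Real.sqrt (2 * (lamc t r - q s))) - t * lamc t r) :
    ContDiffOn ℝ 1 (fun p : ℝ × ℝ => K1 p.1 p.2) Ωc ∧
    ∀ p ∈ Ωc,
      HasDerivAt (fun t => K1 t p.2) (-(lamc p.1 p.2)) p.1 ∧
      HasDerivAt (fun r => K1 p.1 r)
        (w p.2 * Real.sqrt (2 * (lamc p.1 p.2 - q p.2))) p.2 ∧
      -(lamc p.1 p.2)
        + (1 / 2) * ((w p.2)⁻¹ * (w p.2 * Real.sqrt (2 * (lamc p.1 p.2 - q p.2)))) ^ 2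
        + q p.2 = 0 := by
  -- extended coefficient functions, continuous on all of ℝ
  set wt : ℝ → ℝ := fun s => w (max s r1) with hwtdef
  set qt : ℝ → ℝ := fun s => q (max s r1) with hqtdef
  have hwtc : Continuous wt :=
    hw.comp_continuous (continuous_id.max continuous_const) fun x => Set.mem_Ici.2 (le_max_right _ _)
  have hqtc : Continuous qt :=
    hq.comp_continuous (continuous_id.max continuous_const) fun x => Set.mem_Ici.2 (le_max_right _ _)
  have hwt1 : ∀ s, c1 ≤ wt s := fun s => hwl _ (le_max_right _ _)
  have hqt2 : ∀ s, qt s ≤ (lam0 + lam1) / 2 := fun s => hqu _ (le_max_right _ _)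
  have hwts : ∀ s, r1 ≤ s → wt s = w s := fun s hs => by
    simp only [hwtdef, max_eq_left hs]
  have hqts : ∀ s, r1 ≤ s → qt s = q s := fun s hs => by
    simp only [hqtdef, max_eq_left hs]
  set δ0 : ℝ := (lam1 - lam0) / 2 with hδ0def
  have hδ0 : 0 < δ0 := by simp only [hδ0def]; linarith
  have hpos : ∀ lam s, lam1 ≤ lam → δ0 ≤ lam - qt s := by
    intro lam s h
    have := hqt2 s
    simp only [hδ0def]; linarith
  -- integrands
  set g : ℝ → ℝ → ℝ := fun lam s => wt s * Real.sqrt (2 * (lam - qt s)) with hgdef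
  set f : ℝ → ℝ → ℝ := fun lam s => wt s / Real.sqrt (2 * (max lam lam1 - qt s)) with hfdef
  have hgc : Continuous (Function.uncurry g) := by
    apply Continuous.mul (hwtc.comp continuous_snd)
    exact Real.continuous_sqrt.comp
      (continuous_const.mul (continuous_fst.sub (hqtc.comp continuous_snd)))
  have hfden : ∀ lam s, 0 < Real.sqrt (2 * (max lam lam1 - qt s)) := by
    intro lam s
    have := hpos (max lam lam1) s (le_max_right _ _)
    exact Real.sqrt_pos.2 (by linarith)
  have hfc : Continuous (Function.uncurry f) := by
    apply Continuous.div (hwtc.comp continuous_snd)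
    · exact Real.continuous_sqrt.comp (continuous_const.mul
        (((continuous_fst.max continuous_const)).sub (hqtc.comp continuous_snd)))
    · exact fun p => (hfden p.1 p.2).ne'
  have hgsc : ∀ lam, Continuous (g lam) := fun lam =>
    hgc.comp (continuous_const.prodMk continuous_id)
  have hfsc : ∀ lam, Continuous (f lam) := fun lam =>
    hfc.comp (continuous_const.prodMk continuous_id)
  -- the parametric primitives
  set G : ℝ × ℝ → ℝ := fun p => ∫ s in r1..p.2, g p.1 s with hGdef
  set F : ℝ × ℝ → ℝ := fun p => ∫ s in r1..p.2, f p.1 s with hFdef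
  have hGc : Continuous G := intervalIntegral.continuous_parametric_primitive_of_continuous hgc
  have hFc : Continuous F := intervalIntegral.continuous_parametric_primitive_of_continuous hfc
  -- identification with T and K1 on the relevant region
  have hTF : ∀ lam r, lam1 ≤ lam → r1 ≤ r → T lam r = F (lam, r) := by
    intro lam r hl hr
    rw [hT]
    apply intervalIntegral.integral_congr
    intro s hs
    rw [Set.uIcc_of_le hr] at hs
    simp only [hfdef, hwts s hs.1, hqts s hs.1, max_eq_left hl]
  have hmem : ∀ p ∈ Ωc, 0 < p.1 ∧ r1 < p.2 ∧ p.1 < T lam1 p.2 := by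
    intro p hp; rwa [hΩc] at hp
  have hK1G : ∀ p ∈ Ωc, K1 p.1 p.2 = G (lamc p.1 p.2, p.2) - p.1 * lamc p.1 p.2 := by
    intro p hp
    obtain ⟨hp1, hp2, hp3⟩ := hmem p hp
    rw [hK1]
    congr 1
    apply intervalIntegral.integral_congr
    intro s hs
    rw [Set.uIcc_of_le hp2.le] at hs
    simp only [hgdef, hwts s hs.1, hqts s hs.1]
  -- Ωc is open
  have hΩopen : IsOpen Ωc := by
    have hset : Ωc = {p : ℝ × ℝ | 0 < p.1} ∩
        ({p : ℝ × ℝ | r1 < p.2} ∩ {p : ℝ × ℝ | p.1 < F (lam1, p.2)}) := by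
      rw [hΩc]; ext p
      simp only [Set.mem_setOf_eq, Set.mem_inter_iff]
      constructor
      · rintro ⟨h1, h2, h3⟩; exact ⟨h1, h2, by rwa [← hTF lam1 p.2 le_rfl h2.le]⟩
      · rintro ⟨h1, h2, h3⟩; exact ⟨h1, h2, by rwa [hTF lam1 p.2 le_rfl h2.le]⟩
    rw [hset]
    exact (isOpen_lt continuous_const continuous_fst).inter
      ((isOpen_lt continuous_const continuous_snd).inter
        (isOpen_lt continuous_fst (hFc.comp (continuous_const.prodMk continuous_snd))))
  -- monotonicity of F in λ
  have hFmono : ∀ lam mu r, lam1 ≤ lam → lam ≤ mu → r1 ≤ r → F (mu, r) ≤ F (lam, r) := by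
    intro lam mu r h1 h2 hr
    apply intervalIntegral.integral_mono_on hr ((hfsc mu).intervalIntegrable _ _)
      ((hfsc lam).intervalIntegrable _ _)
    intro s _
    simp only [hfdef]
    have hb := hfden lam s
    have hwge : 0 ≤ wt s := le_trans hc1.le (hwt1 s)
    apply div_le_div_of_nonneg_left hwge hb
    apply Real.sqrt_le_sqrt
    have : max lam lam1 ≤ max mu lam1 := max_le_max h2 le_rfl
    linarith
  have hFstrict : ∀ lam mu r, lam1 ≤ lam → lam < mu → r1 < r → F (mu, r) < F (lam, r) := by
    intro lam mu r h1 h2 hr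
    have key : ∀ s, f mu s < f lam s := by
      intro s
      simp only [hfdef]
      have hb := hfden lam s
      have hb' := hfden mu s
      apply div_lt_div_of_pos_left (lt_of_lt_of_le hc1 (hwt1 s)) hb
      apply Real.sqrt_lt_sqrt (by have := hpos (max lam lam1) s (le_max_right _ _); linarith)
      have h3 : max lam lam1 < max mu lam1 := by
        rw [max_eq_left h1, max_eq_left (le_trans h1 h2.le)]; exact h2
      linarith
    exact intervalIntegral.integral_lt_integral_of_continuousOn_of_le_of_exists_lt hr
      (hfsc mu).continuousOn (hfsc lam).continuousOn (fun s _ => (key s).le)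
      ⟨r1, ⟨le_rfl, hr.le⟩, key r1⟩
  -- continuity of λc (as an eventual statement)
  have hlamcont : ∀ p0 ∈ Ωc, ∀ ε > 0, ∀ᶠ p in nhds p0,
      p ∈ Ωc ∧ |lamc p.1 p.2 - lamc p0.1 p0.2| < ε := by
    intro p0 hp0 ε hε
    obtain ⟨hl0, hT0⟩ := hlamc p0 hp0
    obtain ⟨h01, h02, h03⟩ := hmem p0 hp0
    set lam_0 := lamc p0.1 p0.2 with hlam_0
    set ε' := min (ε / 2) ((lam_0 - lam1) / 2) with hε'def
    have hε'pos : 0 < ε' := lt_min (by linarith) (by linarith)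
    have hε'le : ε' ≤ (lam_0 - lam1) / 2 := min_le_right _ _
    have hε'le2 : ε' ≤ ε / 2 := min_le_left _ _
    have hF0 : F (lam_0, p0.2) = p0.1 := by rw [← hTF _ _ hl0.le h02.le, hT0]
    have hup : F (lam_0 + ε', p0.2) < p0.1 := by
      rw [← hF0]
      exact hFstrict lam_0 (lam_0 + ε') p0.2 hl0.le (by linarith) h02
    have hdown : p0.1 < F (lam_0 - ε', p0.2) := by
      rw [← hF0]
      exact hFstrict (lam_0 - ε') lam_0 p0.2 (by linarith) (by linarith) h02
    have e1 : ∀ᶠ p in nhds p0, p ∈ Ωc := hΩopen.eventually_mem hp0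
    have e2 : ∀ᶠ p in nhds p0, F (lam_0 + ε', p.2) < p.1 := by
      have : IsOpen {p : ℝ × ℝ | F (lam_0 + ε', p.2) < p.1} :=
        isOpen_lt (hFc.comp (continuous_const.prodMk continuous_snd)) continuous_fst
      exact this.eventually_mem hup
    have e3 : ∀ᶠ p in nhds p0, p.1 < F (lam_0 - ε', p.2) := by
      have : IsOpen {p : ℝ × ℝ | p.1 < F (lam_0 - ε', p.2)} :=
        isOpen_lt continuous_fst (hFc.comp (continuous_const.prodMk continuous_snd))
      exact this.eventually_mem hdown
    filter_upwards [e1, e2, e3] with p hp hup' hdown'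
    refine ⟨hp, ?_⟩
    obtain ⟨hlp, hTp⟩ := hlamc p hp
    obtain ⟨hp1, hp2, hp3⟩ := hmem p hp
    have hFp : F (lamc p.1 p.2, p.2) = p.1 := by rw [← hTF _ _ hlp.le hp2.le, hTp]
    have hgt : lam_0 - ε' < lamc p.1 p.2 := by
      by_contra hcon
      push_neg at hcon
      have := hFmono (lamc p.1 p.2) (lam_0 - ε') p.2 hlp.le hcon hp2.le
      rw [hFp] at this
      linarith
    have hlt : lamc p.1 p.2 < lam_0 + ε' := by
      by_contra hcon
      push_neg at hcon
      have := hFmono (lam_0 + ε') (lamc p.1 p.2) p.2 (by linarith) hcon hp2.le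
      rw [hFp] at this
      linarith
    rw [abs_sub_lt_iff]
    constructor <;> linarith
  -- the envelope (maximum) property
  have hmax : ∀ p ∈ Ωc, ∀ lam, lam1 ≤ lam → G (lam, p.2) - p.1 * lam ≤ K1 p.1 p.2 := by
    intro p hp lam hlam
    obtain ⟨hp1, hp2, hp3⟩ := hmem p hp
    obtain ⟨hmu, hTmu⟩ := hlamc p hp
    set mu := lamc p.1 p.2 with hmudef
    rw [hK1G p hp]
    have hFp : F (mu, p.2) = p.1 := by rw [← hTF _ _ hmu.le hp2.le, hTmu]
    have key : G (lam, p.2) - G (mu, p.2) ≤ p.1 * (lam - mu) := by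
      have hsub : G (lam, p.2) - G (mu, p.2) = ∫ s in r1..p.2, (g lam s - g mu s) := by
        simp only [hGdef]
        rw [intervalIntegral.integral_sub ((hgsc lam).intervalIntegrable _ _)
          ((hgsc mu).intervalIntegrable _ _)]
      have hle : (∫ s in r1..p.2, (g lam s - g mu s))
          ≤ ∫ s in r1..p.2, (lam - mu) * f mu s := by
        apply intervalIntegral.integral_mono_on hp2.le
          (((hgsc lam).sub (hgsc mu)).intervalIntegrable _ _)
          ((continuous_const.mul (hfsc mu)).intervalIntegrable _ _)
        intro s _
        have hq0 : δ0 ≤ mu - qt s := hpos mu s hmu.le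
        have ha : (0:ℝ) ≤ 2 * (lam - qt s) := by have := hpos lam s hlam; linarith
        have hb : (0:ℝ) < 2 * (mu - qt s) := by linarith
        have htan := sqrt_tangent_aux ha hb
        have hwge : 0 ≤ wt s := le_trans hc1.le (hwt1 s)
        have hsne : Real.sqrt (2 * (mu - qt s)) ≠ 0 := ne_of_gt (Real.sqrt_pos.2 hb)
        have step1 : g lam s - g mu s
            ≤ wt s * ((2 * (lam - qt s) - 2 * (mu - qt s)) / (2 * Real.sqrt (2 * (mu - qt s))))
            := by
          simp only [hgdef]
          rw [← mul_sub]
          exact mul_le_mul_of_nonneg_left htan hwge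
        have step2 : wt s * ((2 * (lam - qt s) - 2 * (mu - qt s))
            / (2 * Real.sqrt (2 * (mu - qt s)))) = (lam - mu) * f mu s := by
          simp only [hfdef, max_eq_left hmu.le]
          field_simp
          ring
        exact step1.trans step2.le
      have hconst : (∫ s in r1..p.2, (lam - mu) * f mu s) = (lam - mu) * F (mu, p.2) := by
        rw [intervalIntegral.integral_const_mul]
      rw [hsub]
      calc (∫ s in r1..p.2, (g lam s - g mu s)) ≤ (lam - mu) * F (mu, p.2) := by
            rw [← hconst]; exact hle
        _ = p.1 * (lam - mu) := by rw [hFp]; ring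
    linarith
  -- the joint Fréchet derivative of K1 at each point of Ωc
  have hfderiv : ∀ p0 ∈ Ωc, HasFDerivAt (fun p : ℝ × ℝ => K1 p.1 p.2)
      ((-(lamc p0.1 p0.2)) • (ContinuousLinearMap.fst ℝ ℝ ℝ)
        + (g (lamc p0.1 p0.2) p0.2) • (ContinuousLinearMap.snd ℝ ℝ ℝ)) p0 := by
    intro p0 hp0
    obtain ⟨h01, h02, h03⟩ := hmem p0 hp0
    obtain ⟨hl0, hT0⟩ := hlamc p0 hp0
    set lam_0 := lamc p0.1 p0.2 with hlam_0
    set g0 := g lam_0 p0.2 with hg0def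
    apply HasFDerivAt.of_isLittleO
    rw [Asymptotics.isLittleO_iff]
    intro c hc
    obtain ⟨δ, hδpos, hδ⟩ := Metric.continuousAt_iff.1 hgc.continuousAt (c / 2) (half_pos hc)
    have e1 := hlamcont p0 hp0 (min (c / 2) (δ / 2)) (lt_min (half_pos hc) (half_pos hδpos))
    have e2 : ∀ᶠ p in nhds p0, dist p p0 < δ / 2 := Metric.ball_mem_nhds p0 (half_pos hδpos)
    filter_upwards [e1, e2] with p hp1 hp2
    obtain ⟨hpΩ, hplam⟩ := hp1
    obtain ⟨hq1, hq2, hq3⟩ := hmem p hpΩ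
    obtain ⟨hlp, hTp⟩ := hlamc p hpΩ
    set mu := lamc p.1 p.2 with hmudef
    -- the two uniform integral estimates
    have hestim : ∀ lam : ℝ, |lam - lam_0| < δ / 2 →
        |(∫ s in p0.2..p.2, g lam s) - g0 * (p.2 - p0.2)| ≤ c / 2 * |p.2 - p0.2| := by
      intro lam hlamnear
      have heq : (∫ s in p0.2..p.2, g lam s) - g0 * (p.2 - p0.2)
          = ∫ s in p0.2..p.2, (g lam s - g0) := by
        rw [intervalIntegral.integral_sub ((hgsc lam).intervalIntegrable _ _)
          (intervalIntegrable_const), intervalIntegral.integral_const, smul_eq_mul, mul_comm]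
      rw [heq, ← Real.norm_eq_abs, ← Real.norm_eq_abs]
      apply intervalIntegral.norm_integral_le_of_norm_le_const
      intro s hs
      have hs' : |s - p0.2| ≤ |p.2 - p0.2| := by
        rcases le_total p0.2 p.2 with h | h
        · rw [Set.uIoc_of_le h] at hs
          rw [abs_of_nonneg (by linarith [hs.1]), abs_of_nonneg (by linarith)]
          linarith [hs.2]
        · rw [Set.uIoc_of_ge h] at hs
          rw [abs_of_nonpos (by linarith [hs.2]), abs_of_nonpos (by linarith)]
          linarith [hs.1]
      have hr2 : |p.2 - p0.2| < δ / 2 := by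
        calc |p.2 - p0.2| ≤ dist p p0 := by
              rw [Prod.dist_eq, Real.dist_eq]; exact le_max_right _ _
          _ < δ / 2 := hp2
      have hdist : dist ((lam, s) : ℝ × ℝ) ((lam_0, p0.2) : ℝ × ℝ) < δ := by
        rw [Prod.dist_eq]
        apply max_lt
        · rw [Real.dist_eq]; linarith
        · rw [Real.dist_eq]; linarith [lt_of_le_of_lt hs' hr2]
      have := hδ hdist
      rw [Real.dist_eq] at this
      rw [Real.norm_eq_abs]
      exact le_of_lt this
    -- bounds on the remainder
    have hK1p := hK1G p hpΩ
    have hK1p0 := hK1G p0 hp0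
    have hGsplit : ∀ lam : ℝ, G (lam, p.2) - G (lam, p0.2) = ∫ s in p0.2..p.2, g lam s := by
      intro lam
      simp only [hGdef]
      exact intervalIntegral.integral_interval_sub_left
        ((hgsc lam).intervalIntegrable _ _) ((hgsc lam).intervalIntegrable _ _)
    have hLapp : ((-(lam_0)) • (ContinuousLinearMap.fst ℝ ℝ ℝ)
        + g0 • (ContinuousLinearMap.snd ℝ ℝ ℝ)) (p - p0)
        = -(lam_0) * (p.1 - p0.1) + g0 * (p.2 - p0.2) := by
      simp [ContinuousLinearMap.add_apply]
    have hmunear : |mu - lam_0| < δ / 2 := lt_of_lt_of_le hplam (min_le_right _ _)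
    have hmunear2 : |mu - lam_0| < c / 2 := lt_of_lt_of_le hplam (min_le_left _ _)
    have hupper : K1 p.1 p.2 - K1 p0.1 p0.2 - (-(lam_0) * (p.1 - p0.1) + g0 * (p.2 - p0.2))
        ≤ c / 2 * |p.2 - p0.2| + c / 2 * |p.1 - p0.1| := by
      have h2 : G (mu, p0.2) - p0.1 * mu ≤ K1 p0.1 p0.2 := hmax p0 hp0 mu hlp.le
      have h3 := hestim mu hmunear
      have h4 : (∫ s in p0.2..p.2, g mu s) - g0 * (p.2 - p0.2) ≤ c / 2 * |p.2 - p0.2| :=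
        le_trans (le_abs_self _) h3
      have h5 : -((p.1 - p0.1) * (mu - lam_0)) ≤ c / 2 * |p.1 - p0.1| := by
        calc -((p.1 - p0.1) * (mu - lam_0)) ≤ |(p.1 - p0.1) * (mu - lam_0)| := neg_le_abs _
          _ = |p.1 - p0.1| * |mu - lam_0| := abs_mul _ _
          _ ≤ |p.1 - p0.1| * (c / 2) := by
              apply mul_le_mul_of_nonneg_left hmunear2.le (abs_nonneg _)
          _ = c / 2 * |p.1 - p0.1| := by ring
      have hsplit := hGsplit mu
      have e : G (mu, p.2) - p.1 * mu - (G (mu, p0.2) - p0.1 * mu)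
          - (-(lam_0) * (p.1 - p0.1) + g0 * (p.2 - p0.2))
          = ((∫ s in p0.2..p.2, g mu s) - g0 * (p.2 - p0.2))
            + (-((p.1 - p0.1) * (mu - lam_0))) := by
        rw [← hsplit]; ring
      rw [hK1p]
      linarith [h2, h4, h5, e]
    have hlower : -(c / 2 * |p.2 - p0.2|)
        ≤ K1 p.1 p.2 - K1 p0.1 p0.2 - (-(lam_0) * (p.1 - p0.1) + g0 * (p.2 - p0.2)) := by
      have h1 : G (lam_0, p.2) - p.1 * lam_0 ≤ K1 p.1 p.2 := hmax p hpΩ lam_0 hl0.le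
      have h3 := hestim lam_0 (by simpa using half_pos hδpos)
      have h4 : -(c / 2 * |p.2 - p0.2|)
          ≤ (∫ s in p0.2..p.2, g lam_0 s) - g0 * (p.2 - p0.2) := by
        have := neg_abs_le ((∫ s in p0.2..p.2, g lam_0 s) - g0 * (p.2 - p0.2))
        linarith [abs_le.1 h3]
      have hsplit := hGsplit lam_0
      have e : G (lam_0, p.2) - p.1 * lam_0 - (G (lam_0, p0.2) - p0.1 * lam_0)
          - (-(lam_0) * (p.1 - p0.1) + g0 * (p.2 - p0.2))
          = (∫ s in p0.2..p.2, g lam_0 s) - g0 * (p.2 - p0.2) := by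
        rw [← hsplit]; ring
      rw [hK1p0]
      linarith [h1, h4, e]
    have habs : |K1 p.1 p.2 - K1 p0.1 p0.2 - (-(lam_0) * (p.1 - p0.1) + g0 * (p.2 - p0.2))|
        ≤ c / 2 * |p.2 - p0.2| + c / 2 * |p.1 - p0.1| := by
      rw [abs_le]
      constructor
      · have : (0:ℝ) ≤ c / 2 * |p.1 - p0.1| := by positivity
        linarith
      · exact hupper
    have hnorm1 : |p.1 - p0.1| ≤ ‖p - p0‖ := by
      rw [Prod.norm_def]
      calc |p.1 - p0.1| = ‖(p - p0).1‖ := by rw [Real.norm_eq_abs]; norm_num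
        _ ≤ _ := le_max_left _ _
    have hnorm2 : |p.2 - p0.2| ≤ ‖p - p0‖ := by
      rw [Prod.norm_def]
      calc |p.2 - p0.2| = ‖(p - p0).2‖ := by rw [Real.norm_eq_abs]; norm_num
        _ ≤ _ := le_max_right _ _
    calc ‖K1 p.1 p.2 - K1 p0.1 p0.2 - ((-(lam_0)) • (ContinuousLinearMap.fst ℝ ℝ ℝ)
            + g0 • (ContinuousLinearMap.snd ℝ ℝ ℝ)) (p - p0)‖
        = |K1 p.1 p.2 - K1 p0.1 p0.2 - (-(lam_0) * (p.1 - p0.1) + g0 * (p.2 - p0.2))| := by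
          rw [hLapp, Real.norm_eq_abs]
      _ ≤ c / 2 * |p.2 - p0.2| + c / 2 * |p.1 - p0.1| := habs
      _ ≤ c / 2 * ‖p - p0‖ + c / 2 * ‖p - p0‖ := by
          have hc2 : (0:ℝ) ≤ c / 2 := (half_pos hc).le
          gcongr
      _ = c * ‖p - p0‖ := by ring
  -- partial derivatives
  have hgw : ∀ p ∈ Ωc, g (lamc p.1 p.2) p.2
      = w p.2 * Real.sqrt (2 * (lamc p.1 p.2 - q p.2)) := by
    intro p hp
    obtain ⟨hp1, hp2, hp3⟩ := hmem p hp
    simp only [hgdef, hwts p.2 hp2.le, hqts p.2 hp2.le]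
  have hpd : ∀ p ∈ Ωc, HasDerivAt (fun t => K1 t p.2) (-(lamc p.1 p.2)) p.1 ∧
      HasDerivAt (fun r => K1 p.1 r)
        (w p.2 * Real.sqrt (2 * (lamc p.1 p.2 - q p.2))) p.2 := by
    intro p hp
    have hFd := hfderiv p hp
    constructor
    · have h1 : HasDerivAt (fun t : ℝ => ((t, p.2) : ℝ × ℝ)) ((1:ℝ), (0:ℝ)) p.1 :=
        (hasDerivAt_id p.1).prodMk (hasDerivAt_const p.1 p.2)
      have := hFd.comp_hasDerivAt p.1 h1
      simpa [Function.comp_def] using this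
    · have h1 : HasDerivAt (fun r : ℝ => ((p.1, r) : ℝ × ℝ)) ((0:ℝ), (1:ℝ)) p.2 :=
        (hasDerivAt_const p.2 p.1).prodMk (hasDerivAt_id p.2)
      have h2 := hFd.comp_hasDerivAt p.2 h1
      rw [← hgw p hp]
      simpa [Function.comp_def] using h2
  -- Hamilton–Jacobi identity
  have hHJ : ∀ p ∈ Ωc, -(lamc p.1 p.2)
      + (1 / 2) * ((w p.2)⁻¹ * (w p.2 * Real.sqrt (2 * (lamc p.1 p.2 - q p.2)))) ^ 2
      + q p.2 = 0 := by
    intro p hp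
    obtain ⟨hp1, hp2, hp3⟩ := hmem p hp
    obtain ⟨hlp, _⟩ := hlamc p hp
    have hwne : w p.2 ≠ 0 := ne_of_gt (lt_of_lt_of_le hc1 (hwl _ hp2.le))
    have harg : (0:ℝ) ≤ 2 * (lamc p.1 p.2 - q p.2) := by
      have := hqu p.2 hp2.le; linarith
    rw [inv_mul_cancel_left₀ hwne, Real.sq_sqrt harg]
    ring
  -- C¹ smoothness
  have hdiffOn : DifferentiableOn ℝ (fun p : ℝ × ℝ => K1 p.1 p.2) Ωc := fun p hp =>
    ((hfderiv p hp).differentiableAt).differentiableWithinAt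
  have hlamcOn : ContinuousOn (fun p : ℝ × ℝ => lamc p.1 p.2) Ωc := by
    intro p hp
    apply ContinuousAt.continuousWithinAt
    rw [ContinuousAt, Metric.tendsto_nhds]
    intro ε hε
    filter_upwards [hlamcont p hp ε hε] with p' h
    rw [Real.dist_eq]
    exact h.2
  have hAcont : ContinuousOn (fun p : ℝ × ℝ =>
      (-(lamc p.1 p.2)) • (ContinuousLinearMap.fst ℝ ℝ ℝ)
        + (g (lamc p.1 p.2) p.2) • (ContinuousLinearMap.snd ℝ ℝ ℝ)) Ωc := by
    apply ContinuousOn.add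
    · exact (hlamcOn.neg).smul continuousOn_const
    · refine ContinuousOn.smul (f := fun p : ℝ × ℝ => g (lamc p.1 p.2) p.2)
        (g := fun _ => ContinuousLinearMap.snd ℝ ℝ ℝ) ?_ continuousOn_const
      exact hgc.comp_continuousOn (hlamcOn.prodMk continuous_snd.continuousOn)
  have hCD : ContDiffOn ℝ 1 (fun p : ℝ × ℝ => K1 p.1 p.2) Ωc := by
    have h1 : (1 : WithTop ℕ∞) = 0 + 1 := by norm_num
    rw [h1, contDiffOn_succ_iff_fderiv_of_isOpen hΩopen]
    refine ⟨hdiffOn, ?_, ?_⟩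
    · intro h; exact absurd h (by simp)
    · rw [contDiffOn_zero]
      apply hAcont.congr
      intro p hp
      exact (hfderiv p hp).fderiv
  exact ⟨hCD, fun p hp => ⟨(hpd p hp).1, (hpd p hp).2, hHJ p hp⟩⟩
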